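/- Let G be a North–South skew product over the Bernoulli shift with arcs I, J. Then the set S = ∩_{k≥0} G^{−k}(Σ² × J) is the graph of a continuous function γ⁻ : Σ² → J; in particular S intersects every fiber {ω} × S¹ in exactly one point, and S has measure zero with respect to the product measure P × Leb on Σ² × S¹. -/

import Mathlib

open MeasureTheory Set Filter Topology

instance : Fact ((0 : ℝ) < 2) := ⟨by norm_num⟩

/-- The circle `S¹ = ℝ/2ℤ`. -/
abbrev S1 := AddCircle (2 : ℝ)

/-- The space `Σ² = {0,1}^ℤ` of bi-infinite binary sequences (`false` = 0, `true` = 1),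
with its product (= standard metric) topology and product measurable structure. -/
abbrev Sig2 := ℤ → Bool

instance : Filter.NeBot (𝓝[≠] (0 : S1)) := by
  have hmem : ∀ n : ℕ, (1 : ℝ) / (n + 1) ∈ Set.Ico (0 : ℝ) 2 := by
    intro n
    constructor
    · positivity
    · have h1 : (1 : ℝ) / (n + 1) ≤ 1 := by
        rw [div_le_one (by positivity)]
        linarith [Nat.cast_nonneg (α := ℝ) n]
      linarith
  have htend : Tendsto (fun n : ℕ => (((1 : ℝ) / (n + 1) : ℝ) : S1)) atTop
      (𝓝[≠] (0 : S1)) := by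
    apply tendsto_nhdsWithin_of_tendsto_nhds_of_eventually_within
    · have h0 : Tendsto (fun n : ℕ => (1 : ℝ) / (n + 1)) atTop (𝓝 (0 : ℝ)) :=
        tendsto_one_div_add_atTop_nhds_zero_nat
      have hcont := ((AddCircle.continuous_mk' (2 : ℝ)).tendsto 0).comp h0
      exact hcont
    · filter_upwards with n
      show (((1 : ℝ) / (n + 1) : ℝ) : S1) ≠ 0
      rw [Ne, AddCircle.coe_eq_zero_iff_of_mem_Ico (hmem n)]
      positivity
  exact htend.neBot

/-- The Bernoulli shift `(σω)_k = ω_{k+1}`. -/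
def shift (ω : Sig2) : Sig2 := fun k => ω (k + 1)

/-- The inverse iterate `σ^{−j}ω`, i.e. `(σ^{−j}ω)_k = ω_{k−j}`. -/
def shiftInv (j : ℕ) (ω : Sig2) : Sig2 := fun k => ω (k - (j : ℤ))

/-- The skew product `G(ω,x) = (σω, g_ω(x))` over the Bernoulli shift. -/
def skew (g : Sig2 → S1 ≃ₜ S1) (p : Sig2 × S1) : Sig2 × S1 :=
  (shift p.1, g p.1 p.2)

/-- `G : ℝ → ℝ` is a lift of the circle map `f : S¹ → S¹`. -/
def IsLift (f : S1 → S1) (G : ℝ → ℝ) : Prop :=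
  ∀ x : ℝ, ((G x : ℝ) : S1) = f ((x : ℝ) : S1)

/-- `f` has derivative `c` at the point `p` of the circle (computed via any lift). -/
def HasCircDeriv (f : S1 → S1) (p : S1) (c : ℝ) : Prop :=
  ∃ (G : ℝ → ℝ) (x : ℝ), IsLift f G ∧ ((x : ℝ) : S1) = p ∧ HasDerivAt G c x

/-- `I` is a closed arc of `S¹`, the image of a closed interval of length `< 2`. -/
def IsClosedArc (I : Set S1) : Prop :=
  ∃ a b : ℝ, a ≤ b ∧ b - a < 2 ∧ I = (fun x : ℝ => ((x : ℝ) : S1)) '' Icc a b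

/-- A **North–South skew product** over the Bernoulli shift, with closed arcs `I, J`:
every fiber map is a `C¹` diffeomorphism of the circle with exactly one attracting and one
repelling hyperbolic fixed point; all attractors lie strictly inside `I`, all repellers
strictly inside `J`; `I` is forward invariant and uniformly contracted, `J` is backward
invariant and uniformly contracted for the inverse maps; and `ω ↦ g_ω` is continuous in
the `C⁰` topology. -/
structure IsNorthSouth (g : Sig2 → S1 ≃ₜ S1) (I J : Set S1) : Prop where
  arcI : IsClosedArc I
  arcJ : IsClosedArc J
  disj : Disjoint I J
  smooth : ∀ ω, ∃ G : ℝ → ℝ, IsLift (g ω) G ∧ ContDiff ℝ 1 G ∧ ∀ x, deriv G x ≠ 0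
  fixedPts : ∀ ω, ∃ a r : S1, a ≠ r ∧ g ω a = a ∧ g ω r = r ∧
    (∀ p, g ω p = p → p = a ∨ p = r) ∧
    (∃ c, HasCircDeriv (g ω) a c ∧ |c| < 1) ∧
    (∃ c, HasCircDeriv (g ω) r c ∧ 1 < |c|) ∧
    a ∈ interior I ∧ r ∈ interior J
  mapsI : ∀ ω, MapsTo (g ω) I I
  lipI : ∃ l : NNReal, (l : ℝ) < 1 ∧ ∀ ω, LipschitzOnWith l (g ω) I
  mapsJ : ∀ ω, MapsTo (g ω).symm J J
  lipJ : ∃ l' : NNReal, (l' : ℝ) < 1 ∧ ∀ ω, LipschitzOnWith l' (g ω).symm J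
  contg : Continuous fun ω => ((g ω : C(S1, S1)))

/-- The backward composition `g_{σ^{−1}ω} ∘ g_{σ^{−2}ω} ∘ ⋯ ∘ g_{σ^{−k}ω}`. -/
def backComp (g : Sig2 → S1 ≃ₜ S1) (ω : Sig2) : ℕ → S1 → S1
  | 0 => id
  | k + 1 => backComp g ω k ∘ (g (shiftInv (k + 1) ω))

namespace NSaux

open scoped ENNReal

variable (g : Sig2 → S1 ≃ₜ S1)

/-- Forward composition along the orbit: second component of `(skew g)^[k]`. -/
noncomputable def fcomp : ℕ → Sig2 → S1 → S1
  | 0, _, x => x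
  | k + 1, ω, x => fcomp k (shift ω) (g ω x)

/-- Inverse of `fcomp`. -/
noncomputable def psi : ℕ → Sig2 → S1 → S1
  | 0, _, y => y
  | k + 1, ω, y => (g ω).symm (psi k (shift ω) y)

@[simp] lemma fcomp_zero (ω : Sig2) (x : S1) : fcomp g 0 ω x = x := rfl
@[simp] lemma fcomp_succ (k : ℕ) (ω : Sig2) (x : S1) :
    fcomp g (k + 1) ω x = fcomp g k (shift ω) (g ω x) := rfl
@[simp] lemma psi_zero (ω : Sig2) (y : S1) : psi g 0 ω y = y := rfl
@[simp] lemma psi_succ (k : ℕ) (ω : Sig2) (y : S1) :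
    psi g (k + 1) ω y = (g ω).symm (psi g k (shift ω) y) := rfl

lemma skew_iter (k : ℕ) (p : Sig2 × S1) :
    (skew g)^[k] p = (shift^[k] p.1, fcomp g k p.1 p.2) := by
  induction k generalizing p with
  | zero => simp
  | succ k ih =>
    rw [Function.iterate_succ_apply, ih]
    simp [skew, Function.iterate_succ_apply]

lemma fcomp_psi (k : ℕ) (ω : Sig2) (y : S1) : fcomp g k ω (psi g k ω y) = y := by
  induction k generalizing ω with
  | zero => rfl
  | succ k ih => simp [ih]

lemma psi_fcomp (k : ℕ) (ω : Sig2) (x : S1) : psi g k ω (fcomp g k ω x) = x := by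
  induction k generalizing ω x with
  | zero => rfl
  | succ k ih => simp [ih]

variable {g} {J : Set S1}

lemma psi_mapsTo (hm : ∀ ω, Set.MapsTo (g ω).symm J J) (k : ℕ) (ω : Sig2) :
    Set.MapsTo (psi g k ω) J J := by
  induction k generalizing ω with
  | zero => exact fun y hy => hy
  | succ k ih => exact fun y hy => hm ω (ih (shift ω) hy)

lemma psi_succ_image_subset (hm : ∀ ω, Set.MapsTo (g ω).symm J J) (k : ℕ) (ω : Sig2) :
    psi g (k + 1) ω '' J ⊆ psi g k ω '' J := by
  induction k generalizing ω with
  | zero =>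
    rintro y ⟨x, hx, rfl⟩
    exact ⟨(g ω).symm x, hm ω hx, rfl⟩
  | succ k ih =>
    rintro y ⟨x, hx, rfl⟩
    obtain ⟨z, hz, hzeq⟩ := ih (shift ω) ⟨x, hx, rfl⟩
    refine ⟨z, hz, ?_⟩
    show (g ω).symm (psi g k (shift ω) z) = (g ω).symm (psi g (k + 1) (shift ω) x)
    rw [hzeq]

lemma psi_image_antitone (hm : ∀ ω, Set.MapsTo (g ω).symm J J) {k m : ℕ} (h : k ≤ m)
    (ω : Sig2) : psi g m ω '' J ⊆ psi g k ω '' J := by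
  induction m with
  | zero => simp_all
  | succ m ih =>
    rcases Nat.lt_or_ge k (m + 1) with h' | h'
    · exact (psi_succ_image_subset hm m ω).trans (ih (Nat.lt_succ_iff.mp h'))
    · have : k = m + 1 := le_antisymm h h'
      subst this; exact fun y hy => hy

lemma ediam_psi_image {l' : NNReal}
    (hlip : ∀ ω, LipschitzOnWith l' (g ω).symm J)
    (hm : ∀ ω, Set.MapsTo (g ω).symm J J) (k : ℕ) (ω : Sig2) :
    EMetric.diam (psi g k ω '' J) ≤ (l' : ℝ≥0∞) ^ k * EMetric.diam J := by
  induction k generalizing ω with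
  | zero => simp [Set.image_id', show psi g 0 ω = id from rfl]
  | succ k ih =>
    have hsub : psi g k (shift ω) '' J ⊆ J := (psi_mapsTo hm k (shift ω)).image_subset
    have heq : psi g (k + 1) ω '' J = (g ω).symm '' (psi g k (shift ω) '' J) := by
      rw [← Set.image_comp]; rfl
    rw [heq]
    calc EMetric.diam ((g ω).symm '' (psi g k (shift ω) '' J))
        ≤ (l' : ℝ≥0∞) * EMetric.diam (psi g k (shift ω) '' J) := by
          apply EMetric.diam_le
          rintro _ ⟨a, ha, rfl⟩ _ ⟨b, hb, rfl⟩
          exact le_trans ((hlip ω) (hsub ha) (hsub hb))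
            (mul_le_mul_right (EMetric.edist_le_diam_of_mem ha hb) _)
      _ ≤ (l' : ℝ≥0∞) * ((l' : ℝ≥0∞) ^ k * EMetric.diam J) :=
          mul_le_mul_right (ih (shift ω)) _
      _ = (l' : ℝ≥0∞) ^ (k + 1) * EMetric.diam J := by ring

lemma continuous_psi (k : ℕ) (ω : Sig2) : Continuous (psi g k ω) := by
  induction k generalizing ω with
  | zero => exact continuous_id
  | succ k ih => exact (g ω).symm.continuous.comp (ih (shift ω))

lemma continuous_shift : Continuous shift :=
  continuous_pi fun k => continuous_apply (k + 1)

lemma continuous_eval' (hc : Continuous fun ω => ((g ω : C(S1, S1)))) :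
    Continuous fun p : Sig2 × S1 => g p.1 p.2 :=
  ContinuousEval.continuous_eval.comp ((hc.comp continuous_fst).prodMk continuous_snd)

lemma continuous_fcomp (hc : Continuous fun ω => ((g ω : C(S1, S1)))) (k : ℕ) :
    Continuous fun p : Sig2 × S1 => fcomp g k p.1 p.2 := by
  induction k with
  | zero => exact continuous_snd
  | succ k ih =>
    have : (fun p : Sig2 × S1 => fcomp g (k + 1) p.1 p.2)
        = (fun p : Sig2 × S1 => fcomp g k p.1 p.2) ∘
          (fun p : Sig2 × S1 => (shift p.1, g p.1 p.2)) := rfl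
    rw [this]
    exact ih.comp ((continuous_shift.comp continuous_fst).prodMk (continuous_eval' hc))


section Gamma

variable (g) in
/-- The limit point of the backward images of `j0`. -/
noncomputable def gam (j0 : S1) (ω : Sig2) : S1 :=
  limUnder atTop fun k => psi g k ω j0

variable {l' : NNReal} {j0 : S1}
variable (hl' : l' < 1)
  (hlip : ∀ ω, LipschitzOnWith l' (g ω).symm J)
  (hm : ∀ ω, Set.MapsTo (g ω).symm J J)
  (hJc : IsCompact J) (hj0 : j0 ∈ J)

include hl' hlip hm hJc hj0

lemma tendsto_psi (ω : Sig2) :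
    Tendsto (fun k => psi g k ω j0) atTop (𝓝 (gam g j0 ω)) := by
  have hD : EMetric.diam J ≠ ⊤ := hJc.isBounded.ediam_ne_top
  have hr : (l' : ℝ≥0∞) < 1 := ENNReal.coe_lt_one_iff.2 hl'
  have hcs : CauchySeq (fun k => psi g k ω j0) := by
    apply cauchySeq_of_edist_le_geometric (l' : ℝ≥0∞) (EMetric.diam J) hr hD
    intro n
    have h1 : psi g n ω j0 ∈ psi g n ω '' J := Set.mem_image_of_mem _ hj0
    have h2 : psi g (n + 1) ω j0 ∈ psi g n ω '' J :=
      psi_succ_image_subset hm n ω (Set.mem_image_of_mem _ hj0)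
    calc edist (psi g n ω j0) (psi g (n + 1) ω j0)
        ≤ EMetric.diam (psi g n ω '' J) := EMetric.edist_le_diam_of_mem h1 h2
      _ ≤ (l' : ℝ≥0∞) ^ n * EMetric.diam J := ediam_psi_image hlip hm n ω
      _ = EMetric.diam J * (l' : ℝ≥0∞) ^ n := mul_comm _ _
  exact hcs.tendsto_limUnder

lemma gam_mem_psi_image (k : ℕ) (ω : Sig2) : gam g j0 ω ∈ psi g k ω '' J := by
  have hcl : IsClosed (psi g k ω '' J) := (hJc.image (continuous_psi k ω)).isClosed
  apply hcl.mem_of_tendsto (tendsto_psi hl' hlip hm hJc hj0 ω)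
  filter_upwards [eventually_ge_atTop k] with m hmk
  exact psi_image_antitone hm hmk ω (Set.mem_image_of_mem _ hj0)

lemma gam_mem (ω : Sig2) : gam g j0 ω ∈ J := by
  simpa [Set.image_id'] using gam_mem_psi_image hl' hlip hm hJc hj0 0 ω

lemma fcomp_gam_mem (k : ℕ) (ω : Sig2) : fcomp g k ω (gam g j0 ω) ∈ J := by
  obtain ⟨y, hy, hyeq⟩ := gam_mem_psi_image hl' hlip hm hJc hj0 k ω
  rw [← hyeq, fcomp_psi]
  exact hy

lemma eq_gam {ω : Sig2} {x : S1} (hx : ∀ k, fcomp g k ω x ∈ J) : x = gam g j0 ω := by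
  have hD : EMetric.diam J ≠ ⊤ := hJc.isBounded.ediam_ne_top
  have hr : (l' : ℝ≥0∞) < 1 := ENNReal.coe_lt_one_iff.2 hl'
  have hxk : ∀ k, x ∈ psi g k ω '' J := fun k =>
    ⟨fcomp g k ω x, hx k, psi_fcomp g k ω x⟩
  have htend : Tendsto (fun k => (l' : ℝ≥0∞) ^ k * EMetric.diam J) atTop (𝓝 0) := by
    have h0 : Tendsto (fun k : ℕ => (l' : ℝ≥0∞) ^ k) atTop (𝓝 0) :=
      ENNReal.tendsto_pow_atTop_nhds_zero_of_lt_one hr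
    simpa using ENNReal.Tendsto.mul_const h0 (Or.inr hD)
  have hle : edist x (gam g j0 ω) ≤ 0 := by
    refine ge_of_tendsto' htend fun k => ?_
    calc edist x (gam g j0 ω)
        ≤ EMetric.diam (psi g k ω '' J) :=
          EMetric.edist_le_diam_of_mem (hxk k) (gam_mem_psi_image hl' hlip hm hJc hj0 k ω)
      _ ≤ (l' : ℝ≥0∞) ^ k * EMetric.diam J := ediam_psi_image hlip hm k ω
  exact edist_le_zero.mp hle

lemma mem_iff_eq_gam (ω : Sig2) (x : S1) :
    (∀ k, fcomp g k ω x ∈ J) ↔ x = gam g j0 ω := by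
  constructor
  · exact fun hx => eq_gam hl' hlip hm hJc hj0 hx
  · rintro rfl
    exact fun k => fcomp_gam_mem hl' hlip hm hJc hj0 k ω

lemma continuous_gam (hc : Continuous fun ω => ((g ω : C(S1, S1)))) :
    Continuous (gam g j0) := by
  apply SeqContinuous.continuous
  intro u ω hu
  apply tendsto_of_subseq_tendsto
  intro ns hns
  obtain ⟨a, haJ, φ, hφ, hconv⟩ :=
    hJc.tendsto_subseq (x := fun n => gam g j0 (u (ns n)))
      (fun n => gam_mem hl' hlip hm hJc hj0 (u (ns n)))
  refine ⟨φ, ?_⟩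
  have huφ : Tendsto (fun n => u (ns (φ n))) atTop (𝓝 ω) :=
    hu.comp (hns.comp hφ.tendsto_atTop)
  have ha : a = gam g j0 ω := by
    apply eq_gam hl' hlip hm hJc hj0
    intro k
    have hten : Tendsto (fun n => fcomp g k (u (ns (φ n))) (gam g j0 (u (ns (φ n)))))
        atTop (𝓝 (fcomp g k ω a)) :=
      ((continuous_fcomp hc k).tendsto (ω, a)).comp (huφ.prodMk_nhds hconv)
    apply hJc.isClosed.mem_of_tendsto hten
    filter_upwards with n
    exact fcomp_gam_mem hl' hlip hm hJc hj0 k (u (ns (φ n)))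
  exact ha ▸ hconv

end Gamma

end NSaux

/-- For a North–South skew product `G` with arcs `I, J`, the set
`S = ∩_{k≥0} G^{−k}(Σ² × J)` is the graph of a continuous function `γ⁻ : Σ² → J`;
in particular `S` meets every fiber `{ω} × S¹` in exactly one point, and `S` has measure
zero with respect to `P × Leb`. -/
theorem stmt_4 (g : Sig2 → S1 ≃ₜ S1) (I J : Set S1) (hNS : IsNorthSouth g I J)
    (P : Measure Sig2) [IsProbabilityMeasure P]
    (hP : ∀ (s : Finset ℤ) (α : ℤ → Bool),
      P {ω : Sig2 | ∀ i ∈ s, ω i = α i} = (1 / 2 : ENNReal) ^ s.card) :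
    ∃ γm : Sig2 → S1, Continuous γm ∧ (∀ ω, γm ω ∈ J) ∧
      (⋂ k : ℕ, (skew g)^[k] ⁻¹' (univ ×ˢ J)) = {p : Sig2 × S1 | p.2 = γm p.1} ∧
      (∀ ω, ∃! x : S1, (ω, x) ∈ ⋂ k : ℕ, (skew g)^[k] ⁻¹' (univ ×ˢ J)) ∧
      (P.prod (volume : Measure S1)) (⋂ k : ℕ, (skew g)^[k] ⁻¹' (univ ×ˢ J)) = 0 := by
  classical
  obtain ⟨l', hl'R, hlip⟩ := hNS.lipJ
  have hl' : l' < 1 := by exact_mod_cast hl'R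
  have hm := hNS.mapsJ
  have hc := hNS.contg
  -- `J` is compact and nonempty
  obtain ⟨a, b, hab, -, hJeq⟩ := hNS.arcJ
  have hJc : IsCompact J := by
    rw [hJeq]
    exact (isCompact_Icc.image (AddCircle.continuous_mk' 2))
  have hJne : J.Nonempty := by
    rw [hJeq]
    exact ⟨_, ⟨a, ⟨le_refl a, hab⟩, rfl⟩⟩
  obtain ⟨j0, hj0⟩ := hJne
  refine ⟨NSaux.gam g j0, NSaux.continuous_gam hl' hlip hm hJc hj0 hc,
    fun ω => NSaux.gam_mem hl' hlip hm hJc hj0 ω, ?_, ?_, ?_⟩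
  · -- the intersection is the graph of `gam`
    ext p
    simp only [Set.mem_iInter, Set.mem_preimage, NSaux.skew_iter, Set.mem_prod,
      Set.mem_univ, true_and, Set.mem_setOf_eq]
    exact NSaux.mem_iff_eq_gam hl' hlip hm hJc hj0 p.1 p.2
  · -- unique intersection with each fiber
    intro ω
    refine ⟨NSaux.gam g j0 ω, ?_, ?_⟩
    · simp only [Set.mem_iInter, Set.mem_preimage, NSaux.skew_iter, Set.mem_prod,
        Set.mem_univ, true_and]
      exact fun k => NSaux.fcomp_gam_mem hl' hlip hm hJc hj0 k ω
    · intro y hy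
      simp only [Set.mem_iInter, Set.mem_preimage, NSaux.skew_iter, Set.mem_prod,
        Set.mem_univ, true_and] at hy
      exact NSaux.eq_gam hl' hlip hm hJc hj0 hy
  · -- measure zero
    have hgr : (⋂ k : ℕ, (skew g)^[k] ⁻¹' (univ ×ˢ J))
        = {p : Sig2 × S1 | p.2 = NSaux.gam g j0 p.1} := by
      ext p
      simp only [Set.mem_iInter, Set.mem_preimage, NSaux.skew_iter, Set.mem_prod,
        Set.mem_univ, true_and, Set.mem_setOf_eq]
      exact NSaux.mem_iff_eq_gam hl' hlip hm hJc hj0 p.1 p.2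
    rw [hgr]
    have hScl : IsClosed {p : Sig2 × S1 | p.2 = NSaux.gam g j0 p.1} :=
      isClosed_eq continuous_snd ((NSaux.continuous_gam hl' hlip hm hJc hj0 hc).comp
        continuous_fst)
    rw [Measure.prod_apply hScl.measurableSet]
    have hfiber : ∀ ω : Sig2,
        (Prod.mk ω ⁻¹' {p : Sig2 × S1 | p.2 = NSaux.gam g j0 p.1}) = {NSaux.gam g j0 ω} := by
      intro ω
      ext x
      simp [Set.mem_preimage, Set.mem_singleton_iff]
    have hzero : ∀ ω : Sig2, (volume : Measure S1) {NSaux.gam g j0 ω} = 0 := fun ω =>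
      measure_singleton _
    simp only [hfiber, hzero, lintegral_zero]
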